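/- A subset Q of a topological space X is compact if and only if for every topological space Z and every open set W ⊆ Z × X, the set {z ∈ Z | ∀ q ∈ Q, (z, q) ∈ W} is open in Z. -/

import Mathlib

universe u

open Set Filter Topology

theorem stmt6 {X : Type u} [TopologicalSpace X] (Q : Set X) :
    IsCompact Q ↔
      ∀ (Z : Type u) [TopologicalSpace Z] (W : Set (Z × X)), IsOpen W →
        IsOpen {z : Z | ∀ q ∈ Q, (z, q) ∈ W} := by
  constructor
  · intro hQ Z _ W hW
    rw [isOpen_iff_mem_nhds]
    intro z hz
    exact hQ.eventually_forall_of_forall_eventually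
      (P := fun z q => (z, q) ∈ W) (fun q hq => hW.mem_nhds (hz q hq))
  · intro h f hne hle
    by_contra hc
    push_neg at hc
    letI : TopologicalSpace (Option X) :=
      { IsOpen := fun S => none ∈ S → some ⁻¹' S ∈ f
        isOpen_univ := fun _ => univ_mem
        isOpen_inter := fun S T hS hT hmem => by
          rw [Set.preimage_inter]; exact inter_mem (hS hmem.1) (hT hmem.2)
        isOpen_sUnion := fun 𝒮 h𝒮 hmem => by
          obtain ⟨S, hS, hnS⟩ := hmem
          exact mem_of_superset (h𝒮 S hS hnS)
            (Set.preimage_mono (Set.subset_sUnion_of_mem hS)) }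
    set D : Set (Option X × X) := {p | ∃ x ∈ Q, p = (some x, x)} with hD
    have hWo : IsOpen (closure D)ᶜ := isOpen_compl_iff.mpr isClosed_closure
    have hS := h (Option X) (closure D)ᶜ hWo
    have hnone : (none : Option X) ∈ {z : Option X | ∀ q ∈ Q, (z, q) ∈ (closure D)ᶜ} := by
      intro q hq
      have hncl := hc q hq
      rw [clusterPt_iff_nonempty] at hncl
      push_neg at hncl
      obtain ⟨U, hU, A, hA, hdisj⟩ := hncl
      intro hmem
      rw [mem_closure_iff_nhds] at hmem
      have hUA : ({none} ∪ some '' A : Set (Option X)) ×ˢ U ∈ 𝓝 ((none : Option X), q) := by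
        rw [nhds_prod_eq]
        refine prod_mem_prod ?_ hU
        refine IsOpen.mem_nhds ?_ (Or.inl rfl)
        intro _
        have : some ⁻¹' ({none} ∪ some '' A : Set (Option X)) = A := by
          ext x
          simp
        rw [this]; exact hA
      obtain ⟨p, ⟨hp1, hp2⟩, hpD⟩ := hmem _ hUA
      obtain ⟨x, hxQ, rfl⟩ := hpD
      rcases hp1 with h1 | h1
      · simp at h1
      · obtain ⟨y, hyA, hyx⟩ := h1
        have : x ∈ A := by cases hyx; exact hyA
        exact (Set.eq_empty_iff_forall_notMem.mp hdisj x) ⟨hp2, this⟩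
    have hSf : some ⁻¹' {z : Option X | ∀ q ∈ Q, (z, q) ∈ (closure D)ᶜ} ∈ f := hS hnone
    have hQf : Q ∈ f := le_principal_iff.mp hle
    obtain ⟨x, hx1, hx2⟩ := Filter.nonempty_of_mem (inter_mem hSf hQf)
    exact hx1 x hx2 (subset_closure ⟨x, hx2, rfl⟩)
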